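/- In G(n,p), run the alternative forcing process in which every blue vertex u forces each white neighbor independently with probability min{1, deg_{Y_{≤i}}[u]/d̃_L}, and suppose Y_{≤i} ⊆ V consists of the blue vertices after i ≥ 0 rounds. Let Y_{i+1} denote the set of white vertices forced in round i+1. Then for any S ⊆ V ∖ Y_{≤i} and any S* ⊆ V ∖ (Y_{≤i} ∪ S), conditioned on the event {Y_{i+1} = S}, on the set Y_{≤i}, and on the edges within Y_{≤i}, the number of edges e(Y_{≤i}, S ∪ S*) is stochastically upper bounded by |S| + Bin(|Y_{≤i}|·|S| + |Y_{≤i}|·|S*|, p). -/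

import Mathlib

open Finset Filter Real
open scoped Classical

namespace PZF

variable {V : Type*} [Fintype V] [DecidableEq V]

/-- The closed degree of `u` into the set `B`, i.e. `|N[u] ∩ B|`. -/
noncomputable def closedDegIn (G : SimpleGraph V) (B : Finset V) (u : V) : ℕ :=
  ((insert u (G.neighborSet u)) ∩ (B : Set V)).ncard

/-- The degree of `u` in `G`. -/
noncomputable def deg (G : SimpleGraph V) (u : V) : ℕ :=
  (G.neighborSet u).ncard

/-- The probability that the blue vertex `u` forces its white neighbour `v` in one round of
probabilistic zero forcing, when the current blue set is `B`: it equals `|N[u] ∩ B| / deg u`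
when `u` is blue, `v` is a white neighbour of `u`, and `0` otherwise. -/
noncomputable def edgeForceProb (G : SimpleGraph V) (B : Finset V) (u v : V) : ℝ :=
  if G.Adj u v ∧ u ∈ B ∧ v ∉ B then (closedDegIn G B u : ℝ) / (deg G u : ℝ) else 0

/-- Given per-ordered-pair forcing probabilities `q u v` (each attempt independent), the
probability that one round starting from the blue set `B` produces exactly the blue set `B'`. -/
noncomputable def stepOfQ (q : V → V → ℝ) (B B' : Finset V) : ℝ :=
  if B ⊆ B' then
    (∏ v ∈ B' \ B, (1 - ∏ u ∈ B, (1 - q u v))) * ∏ v ∈ B'ᶜ, ∏ u ∈ B, (1 - q u v)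
  else 0

/-- The transition rule of standard probabilistic zero forcing, as a function of the history
(the list of blue sets so far; only the current blue set matters). -/
noncomputable def stdStep (G : SimpleGraph V) (hist : List (Finset V)) (B' : Finset V) : ℝ :=
  stepOfQ (edgeForceProb G (hist.getLastD ∅)) (hist.getLastD ∅) B'

/-- Probability of a given future trajectory, given the history so far. -/
noncomputable def seqProbAux (step : List (Finset V) → Finset V → ℝ) :
    List (Finset V) → List (Finset V) → ℝ
  | _, [] => 1
  | hist, B :: rest => step hist B * seqProbAux step (hist ++ [B]) rest

/-- The probability that, running the process given by the transition rule `step` from the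
initial blue set `S` for `ℓ` rounds, the resulting trajectory (including the initial set)
satisfies the predicate `E`. -/
noncomputable def trajEventProb (step : List (Finset V) → Finset V → ℝ) (S : Finset V)
    (ℓ : ℕ) (E : List (Finset V) → Prop) : ℝ :=
  ∑ f : Fin ℓ → Finset V,
    if E (S :: List.ofFn f) then seqProbAux step [S] (List.ofFn f) else 0

/-- `P(A(S,T,ℓ))`: the probability that, starting probabilistic zero forcing from the blue
set `S`, after `ℓ` rounds every vertex of `T` is blue. -/
noncomputable def probForced (G : SimpleGraph V) (S T : Finset V) (ℓ : ℕ) : ℝ :=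
  trajEventProb (stdStep G) S ℓ fun traj => T ⊆ traj.getLastD ∅

/-- `P(pt_pzf(G,S) ≤ ℓ)`: the probability that all vertices are blue after `ℓ` rounds. -/
noncomputable def probAllBlue (G : SimpleGraph V) (S : Finset V) (ℓ : ℕ) : ℝ :=
  probForced G S Finset.univ ℓ

/-- The probability of a fixed graph `G` under the Erdős–Rényi measure `G(n,p)`. -/
noncomputable def erProb (n : ℕ) (p : ℝ) (G : SimpleGraph (Fin n)) : ℝ :=
  p ^ G.edgeSet.ncard * (1 - p) ^ (n.choose 2 - G.edgeSet.ncard)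

/-- The probability that `G(n,p)` satisfies the property `E`. -/
noncomputable def graphProb (n : ℕ) (p : ℝ) (E : SimpleGraph (Fin n) → Prop) : ℝ :=
  ∑ G : SimpleGraph (Fin n), if E G then erProb n p G else 0

/-- `P(pt_pzf(G(n,p), v) ≤ ℓ)`: the joint probability (over the random graph and the forcing
randomness) that probabilistic zero forcing started at `{v}` turns all of `G(n,p)` blue
within `ℓ` rounds. -/
noncomputable def prPZFwithin (n : ℕ) (p : ℝ) (v : Fin n) (ℓ : ℕ) : ℝ :=
  ∑ G : SimpleGraph (Fin n), erProb n p G * probAllBlue G {v} ℓ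

/-- Sample space for one round of the modified forcing rule on `G(n,p)` : a configuration of
potential edges together with a configuration of forcing coins for each ordered pair. -/
abbrev Omega (n : ℕ) := (Sym2 (Fin n) → Bool) × (Fin n × Fin n → Bool)

/-- Bernoulli weight. -/
noncomputable def bern (r : ℝ) (b : Bool) : ℝ := if b then r else 1 - r

/-- The modified forcing probability `min {1, deg_{Y₀}[u] / d̃_L}`, where the closed degree of
`u` into `Y₀` is computed in the exposed (conditioned) graph `H` of edges within `Y₀`. -/
noncomputable def forceP (n : ℕ) (dL : ℝ) (H : SimpleGraph (Fin n)) (Y₀ : Finset (Fin n))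
    (u : Fin n) : ℝ :=
  min 1 ((closedDegIn H Y₀ u : ℝ) / dL)

/-- The weight of a configuration: each potential edge appears independently with probability
`p`, and the forcing coin of a pair `(u, v)` with `u ∈ Y₀`, `v ∉ Y₀` succeeds independently
with probability `min {1, deg_{Y₀}[u] / d̃_L}` (the remaining coins are unused randomness). -/
noncomputable def wt (n : ℕ) (p dL : ℝ) (H : SimpleGraph (Fin n)) (Y₀ : Finset (Fin n))
    (ω : Omega n) : ℝ :=
  (∏ e : Sym2 (Fin n), bern p (ω.1 e)) *
    ∏ x : Fin n × Fin n,
      bern (if x.1 ∈ Y₀ ∧ x.2 ∉ Y₀ then forceP n dL H Y₀ x.1 else p) (ω.2 x)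

/-- Probability of an event, conditionally on the exposed edges within `Y₀` (recorded in `H`). -/
noncomputable def Pr (n : ℕ) (p dL : ℝ) (H : SimpleGraph (Fin n)) (Y₀ : Finset (Fin n))
    (E : Omega n → Prop) : ℝ :=
  ∑ ω : Omega n, if E ω then wt n p dL H Y₀ ω else 0

/-- `Y₁(u)`: the set of vertices of `V \\ Y₀` forced by `u` in this round, namely the white
vertices `v` joined to `u` by an edge whose forcing coin succeeded. -/
noncomputable def Y1 (n : ℕ) (Y₀ : Finset (Fin n)) (u : Fin n) (ω : Omega n) : Finset (Fin n) :=
  Finset.univ.filter fun v => v ∉ Y₀ ∧ ω.1 s(u, v) = true ∧ ω.2 (u, v) = true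

/-- `Y_{i+1}` : the set of all white vertices forced in this round. -/
noncomputable def forcedSet (n : ℕ) (B₀ : Finset (Fin n)) (ω : Omega n) : Finset (Fin n) :=
  Finset.univ.filter fun v => v ∉ B₀ ∧ ∃ u ∈ B₀, ω.1 s(u, v) = true ∧ ω.2 (u, v) = true

/-- `e(A, B)` : the number of edges between the disjoint sets `A` and `B` (pairs `(u,v)` with
`u ∈ A`, `v ∈ B`, and `{u,v}` an edge of the random graph). -/
noncomputable def eCount (n : ℕ) (A B : Finset (Fin n)) (ω : Omega n) : ℕ :=
  ∑ u ∈ A, ∑ v ∈ B, if ω.1 s(u, v) = true then 1 else 0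

/-- `P(Bin(m, p) ≥ k)`, the upper tail of the binomial distribution. -/
noncomputable def binTail (m : ℕ) (p : ℝ) (k : ℕ) : ℝ :=
  ∑ j ∈ Finset.range (m + 1),
    if k ≤ j then (m.choose j : ℝ) * p ^ j * (1 - p) ^ (m - j) else 0

end PZF

namespace PZFAux
open PZF

variable {n : ℕ}

/-- pairs from blue to white -/
noncomputable def PP (n : ℕ) (B₀ : Finset (Fin n)) : Finset (Fin n × Fin n) := B₀ ×ˢ B₀ᶜ

noncomputable def param (n : ℕ) (p dL : ℝ) (H : SimpleGraph (Fin n)) (B₀ : Finset (Fin n))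
    (x : Fin n × Fin n) : ℝ :=
  if x.1 ∈ B₀ ∧ x.2 ∉ B₀ then forceP n dL H B₀ x.1 else p

/-- which coin coordinates are fixed by the match event -/
def cC (S : Finset (Fin n)) (φ : Fin n → Fin n) (h : Fin n × Fin n → Bool)
    (x : Fin n × Fin n) : Prop :=
  (x.2 ∈ S ∧ (x.1 = φ x.2 ∨ (x.1 < φ x.2 ∧ h x = true))) ∨ (x.2 ∉ S ∧ h x = true)

noncomputable def valC (S : Finset (Fin n)) (φ : Fin n → Fin n) (x : Fin n × Fin n) : Bool :=
  if x.2 ∈ S ∧ x.1 = φ x.2 then true else false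

noncomputable def tC (B₀ S : Finset (Fin n)) (φ : Fin n → Fin n) (h : Fin n × Fin n → Bool) :
    Finset (Fin n × Fin n) := (PP n B₀).filter (cC S φ h)

def Match (B₀ S : Finset (Fin n)) (φ : Fin n → Fin n) (h : Fin n × Fin n → Bool)
    (ω : Omega n) : Prop :=
  (∀ x ∈ PP n B₀, ω.1 s(x.1, x.2) = h x) ∧
    (∀ x ∈ tC B₀ S φ h, ω.2 x = valC S φ x)

def consφ (B₀ S : Finset (Fin n)) (φ : Fin n → Fin n) : Prop :=
  (∀ v, v ∉ S → φ v = v) ∧ ∀ v ∈ S, φ v ∈ B₀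

def consh (B₀ : Finset (Fin n)) (h : Fin n × Fin n → Bool) : Prop :=
  ∀ x, x ∉ PP n B₀ → h x = false

def cons2 (S : Finset (Fin n)) (φ : Fin n → Fin n) (h : Fin n × Fin n → Bool) : Prop :=
  ∀ v ∈ S, h (φ v, v) = true

noncomputable def myTail : ℕ → ℝ → ℕ → ℝ
  | 0, _, t => if t = 0 then 1 else 0
  | (m+1), p, t => p * myTail m p (t-1) + (1-p) * myTail m p t

variable {p : ℝ}

lemma myTail_nonneg (hp0 : 0 ≤ p) (hp1 : p ≤ 1) (m t : ℕ) : 0 ≤ myTail m p t := by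
  induction m generalizing t with
  | zero => simp only [myTail]; positivity
  | succ m ih => simp only [myTail]; nlinarith [ih (t-1), ih t]

lemma myTail_anti (hp0 : 0 ≤ p) (hp1 : p ≤ 1) (m : ℕ) {t t' : ℕ} (h : t ≤ t') :
    myTail m p t' ≤ myTail m p t := by
  induction m generalizing t t' with
  | zero =>
      simp only [myTail]
      by_cases h0 : t = 0
      · subst h0; split <;> simp
      · have : t' ≠ 0 := by omega
        simp [h0, this]
  | succ m ih =>
      simp only [myTail]
      have h1 := ih (Nat.sub_le_sub_right h 1)
      have h2 := ih h
      nlinarith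

lemma myTail_zero (hp0 : 0 ≤ p) (hp1 : p ≤ 1) (m : ℕ) : myTail m p 0 = 1 := by
  induction m with
  | zero => simp [myTail]
  | succ m ih => simp [myTail, ih]

lemma myTail_mono_m (hp0 : 0 ≤ p) (hp1 : p ≤ 1) {m m' : ℕ} (h : m ≤ m') (t : ℕ) :
    myTail m p t ≤ myTail m' p t := by
  induction m' with
  | zero => simp [Nat.le_zero.mp h]
  | succ m' ih =>
      rcases Nat.lt_or_ge m (m'+1) with hlt | hge
      · have hle : m ≤ m' := by omega
        calc myTail m p t ≤ myTail m' p t := ih hle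
          _ ≤ myTail (m'+1) p t := by
              simp only [myTail]
              have h1 := myTail_anti hp0 hp1 m' (Nat.sub_le t 1)
              nlinarith
      · have : m = m' + 1 := by omega
        simp [this]


theorem dom {γ : Type*} [DecidableEq γ] (hp0 : 0 ≤ p) (hp1 : p ≤ 1)
    (a b : γ → ℝ) (s : Finset γ) :
    ∀ r ⊆ s, (∀ x ∈ s, 0 ≤ a x) → (∀ x ∈ s, 0 ≤ b x) →
      (∀ x ∈ r, a x ≤ p * (a x + b x)) → ∀ t : ℕ,
    (∑ T ∈ s.powerset,
        if t ≤ (T ∩ r).card then (∏ x ∈ T, a x) * ∏ x ∈ s \ T, b x else 0)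
      ≤ myTail r.card p t * ∏ x ∈ s, (a x + b x) := by
  classical
  induction s using Finset.induction_on with
  | empty =>
      intro r hr _ _ _ t
      have : r = ∅ := Finset.subset_empty.mp hr
      subst this
      simp only [Finset.powerset_empty, Finset.sum_singleton, Finset.empty_inter,
        Finset.card_empty, Finset.prod_empty, Finset.sdiff_empty, mul_one]
      rcases Nat.eq_zero_or_pos t with h0 | h0
      · subst h0; simp [myTail]
      · have : t ≠ 0 := by omega
        simp [myTail, this]
  | @insert y s hy ih =>
      intro r hr ha hb hab t
      have hys : ∀ x ∈ s, 0 ≤ a x := fun x hx => ha x (Finset.mem_insert_of_mem hx)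
      have hbs : ∀ x ∈ s, 0 ≤ b x := fun x hx => hb x (Finset.mem_insert_of_mem hx)
      have hay : 0 ≤ a y := ha y (Finset.mem_insert_self _ _)
      have hby : 0 ≤ b y := hb y (Finset.mem_insert_self _ _)
      rw [Finset.sum_powerset_insert hy]
      have hdiff1 : ∀ T ∈ s.powerset, (insert y s) \ T = insert y (s \ T) := by
        intro T hT
        rw [Finset.mem_powerset] at hT
        ext x
        simp only [Finset.mem_sdiff, Finset.mem_insert]
        constructor
        · rintro ⟨hx1 | hx1, hx2⟩
          · exact Or.inl hx1
          · exact Or.inr ⟨hx1, hx2⟩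
        · rintro (rfl | ⟨hx1, hx2⟩)
          · exact ⟨Or.inl rfl, fun hc => hy (hT hc)⟩
          · exact ⟨Or.inr hx1, hx2⟩
      have hdiff2 : ∀ T ∈ s.powerset, (insert y s) \ (insert y T) = s \ T := by
        intro T hT
        rw [Finset.mem_powerset] at hT
        ext x
        simp only [Finset.mem_sdiff, Finset.mem_insert, not_or]
        constructor
        · rintro ⟨hx1 | hx1, hx2, hx3⟩
          · exact absurd hx1 hx2
          · exact ⟨hx1, hx3⟩
        · rintro ⟨hx1, hx2⟩
          exact ⟨Or.inr hx1, fun hc => hy (hc ▸ hx1), hx2⟩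
      have hprodins : ∏ x ∈ insert y s, (a x + b x) = (a y + b y) * ∏ x ∈ s, (a x + b x) :=
        Finset.prod_insert hy
      by_cases hyr : y ∈ r
      · -- y is a relevant coordinate
        set r' := r.erase y with hr'
        have hr's : r' ⊆ s := by
          intro x hx
          rw [hr', Finset.mem_erase] at hx
          rcases Finset.mem_insert.mp (hr hx.2) with h | h
          · exact absurd h hx.1
          · exact h
        have hrcard : r.card = r'.card + 1 := by
          rw [hr']; rw [Finset.card_erase_of_mem hyr]
          have : 1 ≤ r.card := Finset.card_pos.mpr ⟨y, hyr⟩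
          omega
        have hcap1 : ∀ T ∈ s.powerset, T ∩ r = T ∩ r' := by
          intro T hT
          rw [Finset.mem_powerset] at hT
          ext x
          simp only [Finset.mem_inter, hr', Finset.mem_erase]
          exact ⟨fun ⟨h1, h2⟩ => ⟨h1, fun hc => hy (hT (hc ▸ h1)), h2⟩,
            fun ⟨h1, _, h2⟩ => ⟨h1, h2⟩⟩
        have hcap2 : ∀ T ∈ s.powerset, (insert y T ∩ r).card = (T ∩ r').card + 1 := by
          intro T hT
          rw [Finset.mem_powerset] at hT
          have : insert y T ∩ r = insert y (T ∩ r') := by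
            ext x
            simp only [Finset.mem_inter, Finset.mem_insert, hr', Finset.mem_erase]
            constructor
            · rintro ⟨rfl | hx1, hx2⟩
              · exact Or.inl rfl
              · exact Or.inr ⟨hx1, fun hc => hy (hT (hc ▸ hx1)), hx2⟩
            · rintro (rfl | ⟨hx1, _, hx2⟩)
              · exact ⟨Or.inl rfl, hyr⟩
              · exact ⟨Or.inr hx1, hx2⟩
          rw [this, Finset.card_insert_of_notMem]
          simp only [Finset.mem_inter, hr', Finset.mem_erase, not_and]
          intro hyT
          exact absurd (hT hyT) hy
      -- bounding the two sums
        have ihA := ih r' hr's hys hbs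
          (fun x hx => hab x (by rw [hr', Finset.mem_erase] at hx; exact hx.2)) t
        have ihA' := ih r' hr's hys hbs
          (fun x hx => hab x (by rw [hr', Finset.mem_erase] at hx; exact hx.2)) (t-1)
        have e1 : ∑ T ∈ s.powerset,
            (if t ≤ (T ∩ r).card then (∏ x ∈ T, a x) * ∏ x ∈ insert y s \ T, b x else 0)
            = b y * ∑ T ∈ s.powerset,
              (if t ≤ (T ∩ r').card then (∏ x ∈ T, a x) * ∏ x ∈ s \ T, b x else 0) := by
          rw [Finset.mul_sum]
          apply Finset.sum_congr rfl
          intro T hT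
          rw [hcap1 T hT, hdiff1 T hT, Finset.prod_insert (by
            simp only [Finset.mem_sdiff, not_and]; exact fun hc => absurd hc hy)]
          split <;> ring
        have e2 : ∑ T ∈ s.powerset,
            (if t ≤ ((insert y T) ∩ r).card then (∏ x ∈ insert y T, a x) *
              ∏ x ∈ insert y s \ insert y T, b x else 0)
            = a y * ∑ T ∈ s.powerset,
              (if t - 1 ≤ (T ∩ r').card then (∏ x ∈ T, a x) * ∏ x ∈ s \ T, b x else 0) := by
          rw [Finset.mul_sum]
          apply Finset.sum_congr rfl
          intro T hT
          rw [hcap2 T hT, hdiff2 T hT, Finset.prod_insert (by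
            intro hc; rw [Finset.mem_powerset] at hT; exact hy (hT hc))]
          have : (t ≤ (T ∩ r').card + 1) ↔ (t - 1 ≤ (T ∩ r').card) := by omega
          simp only [this]
          split <;> ring
        rw [e1, e2, hrcard, hprodins]
        have hT1 : myTail (r'.card + 1) p t
            = p * myTail r'.card p (t-1) + (1-p) * myTail r'.card p t := rfl
        rw [hT1]
        have hnn : (0:ℝ) ≤ ∏ x ∈ s, (a x + b x) :=
          Finset.prod_nonneg fun x hx => add_nonneg (hys x hx) (hbs x hx)
        have haby := hab y hyr
        have hanti := myTail_anti hp0 hp1 r'.card (Nat.sub_le t 1)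
        have hTnn := myTail_nonneg hp0 hp1 r'.card t
        have hTnn' := myTail_nonneg hp0 hp1 r'.card (t-1)
        have key : b y * myTail r'.card p t + a y * myTail r'.card p (t-1)
            ≤ (p * myTail r'.card p (t-1) + (1-p) * myTail r'.card p t) * (a y + b y) := by
          nlinarith [mul_nonneg (sub_nonneg.mpr haby) (sub_nonneg.mpr hanti)]
        calc b y * (∑ T ∈ s.powerset,
              if t ≤ (T ∩ r').card then (∏ x ∈ T, a x) * ∏ x ∈ s \ T, b x else 0)
            + a y * (∑ T ∈ s.powerset,
              if t - 1 ≤ (T ∩ r').card then (∏ x ∈ T, a x) * ∏ x ∈ s \ T, b x else 0)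
            ≤ b y * (myTail r'.card p t * ∏ x ∈ s, (a x + b x))
              + a y * (myTail r'.card p (t-1) * ∏ x ∈ s, (a x + b x)) := by
              exact add_le_add (mul_le_mul_of_nonneg_left ihA hby)
                (mul_le_mul_of_nonneg_left ihA' hay)
          _ = (b y * myTail r'.card p t + a y * myTail r'.card p (t-1)) *
                ∏ x ∈ s, (a x + b x) := by ring
          _ ≤ ((p * myTail r'.card p (t-1) + (1-p) * myTail r'.card p t) * (a y + b y)) *
                ∏ x ∈ s, (a x + b x) := mul_le_mul_of_nonneg_right key hnn
          _ = (p * myTail r'.card p (t-1) + (1-p) * myTail r'.card p t) *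
                ((a y + b y) * ∏ x ∈ s, (a x + b x)) := by ring
      · -- y irrelevant
        have hrs : r ⊆ s := by
          intro x hx
          rcases Finset.mem_insert.mp (hr hx) with h | h
          · exact absurd (h ▸ hx) hyr
          · exact h
        have ihA := ih r hrs hys hbs (fun x hx => hab x hx) t
        have hcap2 : ∀ T ∈ s.powerset, (insert y T) ∩ r = T ∩ r := by
          intro T hT
          ext x
          simp only [Finset.mem_inter, Finset.mem_insert]
          constructor
          · rintro ⟨rfl | hx1, hx2⟩
            · exact absurd hx2 hyr
            · exact ⟨hx1, hx2⟩
          · rintro ⟨hx1, hx2⟩; exact ⟨Or.inr hx1, hx2⟩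
        have e1 : ∑ T ∈ s.powerset,
            (if t ≤ (T ∩ r).card then (∏ x ∈ T, a x) * ∏ x ∈ insert y s \ T, b x else 0)
            = b y * ∑ T ∈ s.powerset,
              (if t ≤ (T ∩ r).card then (∏ x ∈ T, a x) * ∏ x ∈ s \ T, b x else 0) := by
          rw [Finset.mul_sum]
          apply Finset.sum_congr rfl
          intro T hT
          rw [hdiff1 T hT, Finset.prod_insert (by
            simp only [Finset.mem_sdiff, not_and]; exact fun hc => absurd hc hy)]
          split <;> ring
        have e2 : ∑ T ∈ s.powerset,
            (if t ≤ ((insert y T) ∩ r).card then (∏ x ∈ insert y T, a x) *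
              ∏ x ∈ insert y s \ insert y T, b x else 0)
            = a y * ∑ T ∈ s.powerset,
              (if t ≤ (T ∩ r).card then (∏ x ∈ T, a x) * ∏ x ∈ s \ T, b x else 0) := by
          rw [Finset.mul_sum]
          apply Finset.sum_congr rfl
          intro T hT
          rw [hcap2 T hT, hdiff2 T hT, Finset.prod_insert (by
            intro hc; rw [Finset.mem_powerset] at hT; exact hy (hT hc))]
          split <;> ring
        rw [e1, e2, hprodins]
        have h1 : b y * (∑ T ∈ s.powerset,
              if t ≤ (T ∩ r).card then (∏ x ∈ T, a x) * ∏ x ∈ s \ T, b x else 0)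
            + a y * (∑ T ∈ s.powerset,
              if t ≤ (T ∩ r).card then (∏ x ∈ T, a x) * ∏ x ∈ s \ T, b x else 0)
            = (a y + b y) * (∑ T ∈ s.powerset,
              if t ≤ (T ∩ r).card then (∏ x ∈ T, a x) * ∏ x ∈ s \ T, b x else 0) := by ring
        rw [h1]
        calc (a y + b y) * (∑ T ∈ s.powerset,
              if t ≤ (T ∩ r).card then (∏ x ∈ T, a x) * ∏ x ∈ s \ T, b x else 0)
            ≤ (a y + b y) * (myTail r.card p t * ∏ x ∈ s, (a x + b x)) :=
              mul_le_mul_of_nonneg_left ihA (add_nonneg hay hby)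
          _ = myTail r.card p t * ((a y + b y) * ∏ x ∈ s, (a x + b x)) := by ring

lemma binTail_zero (p : ℝ) (t : ℕ) : binTail 0 p t = if t = 0 then 1 else 0 := by
  simp [binTail, Nat.le_zero]

lemma binTail_succ (m : ℕ) (p : ℝ) (t : ℕ) :
    binTail (m+1) p t = p * binTail m p (t-1) + (1-p) * binTail m p t := by
  have hg : ∑ j ∈ Finset.range (m+1+1),
      (if t ≤ j then ((m+1).choose j : ℝ) * p ^ j * (1 - p) ^ (m+1 - j) else 0)
      = (∑ j ∈ Finset.range (m+1),
          (if t ≤ j+1 then ((m+1).choose (j+1) : ℝ) * p ^ (j+1) * (1 - p) ^ (m - j) else 0))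
        + (if t ≤ 0 then ((1:ℝ)) * (1-p)^(m+1) else 0) := by
    rw [Finset.sum_range_succ']
    congr 1
    · apply Finset.sum_congr rfl; intro j hj
      have : m + 1 - (j + 1) = m - j := by omega
      rw [this]
    · simp
  have hsplit : ∀ j, (if t ≤ j+1 then ((m+1).choose (j+1) : ℝ) * p ^ (j+1) * (1 - p) ^ (m - j) else 0)
      = (if t ≤ j+1 then (m.choose j : ℝ) * p ^ (j+1) * (1 - p) ^ (m - j) else 0)
        + (if t ≤ j+1 then (m.choose (j+1) : ℝ) * p ^ (j+1) * (1 - p) ^ (m - j) else 0) := by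
    intro j
    rw [Nat.choose_succ_succ]
    push_cast
    split <;> ring
  have h1 : ∑ j ∈ Finset.range (m+1),
      (if t ≤ j+1 then (m.choose j : ℝ) * p ^ (j+1) * (1 - p) ^ (m - j) else 0)
      = p * binTail m p (t-1) := by
    rw [binTail, Finset.mul_sum]
    apply Finset.sum_congr rfl; intro j hj
    have : (t ≤ j + 1) ↔ (t - 1 ≤ j) := by omega
    simp only [this]
    split <;> ring
  have h2 : (if t ≤ 0 then ((1:ℝ)) * (1-p)^(m+1) else 0)
        + ∑ j ∈ Finset.range (m+1),
          (if t ≤ j+1 then (m.choose (j+1) : ℝ) * p ^ (j+1) * (1 - p) ^ (m - j) else 0)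
      = (1-p) * binTail m p t := by
    have hh : ∑ j ∈ Finset.range (m+1+1),
        (if t ≤ j then (m.choose j : ℝ) * p ^ j * (1 - p) ^ (m+1 - j) else 0)
        = (∑ j ∈ Finset.range (m+1),
            (if t ≤ j+1 then (m.choose (j+1) : ℝ) * p ^ (j+1) * (1 - p) ^ (m - j) else 0))
          + (if t ≤ 0 then ((1:ℝ)) * (1-p)^(m+1) else 0) := by
      rw [Finset.sum_range_succ']
      congr 1
      · apply Finset.sum_congr rfl; intro j hj
        have : m + 1 - (j + 1) = m - j := by omega
        rw [this]
      · simp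
    have hlast : ∑ j ∈ Finset.range (m+1+1),
        (if t ≤ j then (m.choose j : ℝ) * p ^ j * (1 - p) ^ (m+1 - j) else 0)
        = ∑ j ∈ Finset.range (m+1),
        (if t ≤ j then (m.choose j : ℝ) * p ^ j * (1 - p) ^ (m+1 - j) else 0) := by
      rw [Finset.sum_range_succ]
      simp [Nat.choose_succ_self]
    rw [add_comm, ← hh, hlast, binTail, Finset.mul_sum]
    apply Finset.sum_congr rfl; intro j hj
    rw [Finset.mem_range] at hj
    have : m + 1 - j = (m - j) + 1 := by omega
    rw [this]
    split <;> ring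
  rw [binTail, hg]
  rw [Finset.sum_congr rfl (fun j _ => hsplit j), Finset.sum_add_distrib]
  rw [h1, ← h2]
  ring

lemma sum_pi_bool {β : Type*} [Fintype β] [DecidableEq β] (W : β → Bool → ℝ) :
    ∑ g : β → Bool, ∏ b, W b (g b) = ∏ b, (W b true + W b false) := by
  have := Finset.prod_univ_sum (fun _ : β => (Finset.univ : Finset Bool)) (fun b y => W b y)
  rw [Fintype.piFinset_univ] at this
  rw [← this]
  apply Finset.prod_congr rfl
  intro b _
  rw [Fintype.sum_bool]

lemma pi_factor' {β γ : Type*} [Fintype β] [DecidableEq β] [Fintype γ] [DecidableEq γ]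
    (W : β → Bool → ℝ) (t : Finset γ) (ι : γ → β)
    (hinj : ∀ x ∈ t, ∀ y ∈ t, ι x = ι y → x = y) (vals : γ → Bool) :
    ∑ g : β → Bool, (if ∀ x ∈ t, g (ι x) = vals x then ∏ b, W b (g b) else 0)
    = (∏ x ∈ t, W (ι x) (vals x)) * ∏ b ∈ (t.image ι)ᶜ, (W b true + W b false) := by
  classical
  set W' : β → Bool → ℝ := fun b y => if ∃ x ∈ t, ι x = b ∧ y ≠ vals x then 0 else W b y
    with hW'
  have claim1 : ∀ g : β → Bool,
      (if ∀ x ∈ t, g (ι x) = vals x then ∏ b, W b (g b) else 0) = ∏ b, W' b (g b) := by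
    intro g
    split
    · next hg =>
        apply Finset.prod_congr rfl
        intro b _
        rw [hW']
        simp only
        rw [if_neg]
        rintro ⟨x, hx, rfl, hne⟩
        exact hne (hg x hx)
    · next hg =>
        push_neg at hg
        obtain ⟨x, hx, hne⟩ := hg
        symm
        apply Finset.prod_eq_zero (Finset.mem_univ (ι x))
        rw [hW']
        simp only
        rw [if_pos]
        exact ⟨x, hx, rfl, hne⟩
  rw [Finset.sum_congr rfl (fun g _ => claim1 g), sum_pi_bool]
  rw [← Finset.prod_mul_prod_compl (t.image ι)]
  congr 1
  · rw [Finset.prod_image hinj]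
    apply Finset.prod_congr rfl
    intro x hx
    have hval : ∀ y : Bool, W' (ι x) y = if y = vals x then W (ι x) y else 0 := by
      intro y
      rw [hW']
      simp only
      by_cases hy : y = vals x
      · rw [if_neg, if_pos hy]
        rintro ⟨x', hx', hxx', hne⟩
        exact hne ((hinj x' hx' x hx hxx') ▸ hy)
      · rw [if_pos ⟨x, hx, rfl, hy⟩, if_neg hy]
    rw [hval true, hval false]
    cases hv : vals x <;> simp [hv]
  · apply Finset.prod_congr rfl
    intro b hb
    rw [Finset.mem_compl] at hb
    have : ∀ y, W' b y = W b y := by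
      intro y
      rw [hW']
      simp only
      rw [if_neg]
      rintro ⟨x, hx, rfl, -⟩
      exact hb (Finset.mem_image_of_mem _ hx)
    rw [this, this]


lemma mem_PP {B₀ : Finset (Fin n)} {x : Fin n × Fin n} :
    x ∈ PP n B₀ ↔ x.1 ∈ B₀ ∧ x.2 ∉ B₀ := by
  simp [PP, Finset.mem_product]

lemma sound {B₀ S : Finset (Fin n)} (hSB : ∀ v ∈ S, v ∉ B₀) {φ : Fin n → Fin n}
    {h : Fin n × Fin n → Bool} {ω : Omega n}
    (hφ : consφ B₀ S φ) (h2 : cons2 S φ h) (hm : Match B₀ S φ h ω) :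
    forcedSet n B₀ ω = S := by
  ext v
  simp only [forcedSet, Finset.mem_filter, Finset.mem_univ, true_and]
  constructor
  · rintro ⟨hvB, u, huB, hedge, hcoin⟩
    by_contra hvS
    have hxPP : (u, v) ∈ PP n B₀ := mem_PP.mpr ⟨huB, hvB⟩
    have hh : h (u, v) = true := by
      have := hm.1 (u, v) hxPP
      rw [← this]; exact hedge
    have hxtC : (u, v) ∈ tC B₀ S φ h := by
      rw [tC, Finset.mem_filter]
      exact ⟨hxPP, Or.inr ⟨hvS, hh⟩⟩
    have := hm.2 (u, v) hxtC
    rw [hcoin, valC, if_neg (by rintro ⟨hvS', -⟩; exact hvS hvS')] at this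
    exact absurd this (by simp)
  · intro hvS
    refine ⟨hSB v hvS, φ v, hφ.2 v hvS, ?_, ?_⟩
    · have hxPP : (φ v, v) ∈ PP n B₀ := mem_PP.mpr ⟨hφ.2 v hvS, hSB v hvS⟩
      rw [hm.1 (φ v, v) hxPP]
      exact h2 v hvS
    · have hxtC : (φ v, v) ∈ tC B₀ S φ h := by
        rw [tC, Finset.mem_filter]
        exact ⟨mem_PP.mpr ⟨hφ.2 v hvS, hSB v hvS⟩, Or.inl ⟨hvS, Or.inl rfl⟩⟩
      rw [hm.2 (φ v, v) hxtC, valC, if_pos ⟨hvS, rfl⟩]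

lemma ecount {B₀ S : Finset (Fin n)} (S' : Finset (Fin n)) (hSB : ∀ v ∈ S, v ∉ B₀)
    (hS' : ∀ w ∈ S', w ∉ B₀ ∧ w ∉ S) {φ : Fin n → Fin n} {h : Fin n × Fin n → Bool}
    {ω : Omega n} (hm : Match B₀ S φ h ω) :
    eCount n B₀ (S ∪ S') ω
      = ∑ x ∈ B₀ ×ˢ (S ∪ S'), (if h x = true then 1 else 0) := by
  rw [eCount, ← Finset.sum_product']
  apply Finset.sum_congr rfl
  intro x hx
  rw [Finset.mem_product] at hx
  have hxPP : x ∈ PP n B₀ := by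
    refine mem_PP.mpr ⟨hx.1, ?_⟩
    rcases Finset.mem_union.mp hx.2 with h1 | h1
    · exact hSB _ h1
    · exact (hS' _ h1).1
  rw [hm.1 x hxPP]

end PZFAux

namespace PZFAux
open PZF
variable {n : ℕ}

lemma exists_match {B₀ S : Finset (Fin n)} {ω : Omega n} (hf : forcedSet n B₀ ω = S) :
    ∃ (φ : Fin n → Fin n) (h : Fin n × Fin n → Bool),
      consφ B₀ S φ ∧ consh B₀ h ∧ cons2 S φ h ∧ Match B₀ S φ h ω := by
  classical
  set W : Fin n → Finset (Fin n) :=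
    fun v => B₀.filter (fun u => ω.1 s(u, v) = true ∧ ω.2 (u, v) = true) with hW
  have hmemf : ∀ v : Fin n, v ∈ forcedSet n B₀ ω ↔
      (v ∉ B₀ ∧ ∃ u ∈ B₀, ω.1 s(u, v) = true ∧ ω.2 (u, v) = true) := by
    intro v; simp [forcedSet]
  have hWmem : ∀ v u : Fin n, u ∈ W v ↔ u ∈ B₀ ∧ ω.1 s(u, v) = true ∧ ω.2 (u, v) = true := by
    intro v u; rw [hW]; simp [Finset.mem_filter]
  have hWne : ∀ v ∈ S, (W v).Nonempty := by
    intro v hv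
    have := (hmemf v).mp (hf ▸ hv)
    obtain ⟨-, u, hu, he, hc⟩ := this
    exact ⟨u, (hWmem v u).mpr ⟨hu, he, hc⟩⟩
  have hSnB : ∀ v ∈ S, v ∉ B₀ := by
    intro v hv
    exact ((hmemf v).mp (hf ▸ hv)).1
  set φ0 : Fin n → Fin n :=
    fun v => if hv : v ∈ S ∧ (W v).Nonempty then (W v).min' hv.2 else v with hφ0
  set h0 : Fin n × Fin n → Bool :=
    fun x => if x ∈ PP n B₀ then ω.1 s(x.1, x.2) else false with hh0
  have hφval : ∀ v (hv : v ∈ S), φ0 v = (W v).min' (hWne v hv) :=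
    fun v hv => dif_pos ⟨hv, hWne v hv⟩
  have hφval' : ∀ v, v ∉ S → φ0 v = v := fun v hv => dif_neg (by tauto)
  have hhval : ∀ x, x ∈ PP n B₀ → h0 x = ω.1 s(x.1, x.2) := fun x hx => if_pos hx
  have hhval' : ∀ x, x ∉ PP n B₀ → h0 x = false := fun x hx => if_neg hx
  refine ⟨φ0, h0, ⟨hφval', ?_⟩, hhval', ?_, ?_, ?_⟩
  · intro v hv
    rw [hφval v hv]
    exact ((hWmem v _).mp ((W v).min'_mem (hWne v hv))).1
  · intro v hv
    have hmin := (hWmem v _).mp ((W v).min'_mem (hWne v hv))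
    rw [hφval v hv, hhval _ (mem_PP.mpr ⟨hmin.1, hSnB v hv⟩)]
    exact hmin.2.1
  · intro x hx
    rw [hhval x hx]
  · intro x hx
    rw [tC, Finset.mem_filter] at hx
    obtain ⟨hxPP, hcC⟩ := hx
    rcases hcC with ⟨hvS, heq | ⟨hlt, hhx⟩⟩ | ⟨hvS, hhx⟩
    · rw [valC, if_pos ⟨hvS, heq⟩]
      have hmin := (hWmem x.2 _).mp ((W x.2).min'_mem (hWne x.2 hvS))
      have hx1 : x.1 = (W x.2).min' (hWne x.2 hvS) := by rw [heq, hφval x.2 hvS]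
      have h5 : ω.2 (x.1, x.2) = true := by rw [hx1]; exact hmin.2.2
      rwa [Prod.mk.eta] at h5
    · rw [valC, if_neg (fun hcon => ne_of_lt hlt hcon.2)]
      by_contra hc
      rw [Bool.not_eq_false] at hc
      rw [hhval x hxPP] at hhx
      have hx1W : x.1 ∈ W x.2 := by
        refine (hWmem x.2 x.1).mpr ⟨(mem_PP.mp hxPP).1, hhx, ?_⟩
        rwa [Prod.mk.eta]
      have hminle : (W x.2).min' (hWne x.2 hvS) ≤ x.1 :=
        (W x.2).min'_le _ hx1W
      rw [hφval x.2 hvS] at hlt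
      exact absurd hlt (not_lt.mpr hminle)
    · rw [valC, if_neg (fun hcon => hvS hcon.1)]
      by_contra hc
      rw [Bool.not_eq_false] at hc
      rw [hhval x hxPP] at hhx
      have hforced : x.2 ∈ forcedSet n B₀ ω := by
        rw [hmemf]
        refine ⟨(mem_PP.mp hxPP).2, x.1, (mem_PP.mp hxPP).1, hhx, ?_⟩
        rwa [Prod.mk.eta]
      rw [hf] at hforced
      exact hvS hforced

lemma unique_helper {B₀ S : Finset (Fin n)} (hSB : ∀ v ∈ S, v ∉ B₀)
    {φ φ' : Fin n → Fin n} {h : Fin n × Fin n → Bool} {ω : Omega n}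
    (hφ : consφ B₀ S φ) (h2 : cons2 S φ h) (hm : Match B₀ S φ h ω)
    (hm' : Match B₀ S φ' h ω) {v : Fin n} (hvS : v ∈ S) (hlt : φ v < φ' v) : False := by
  have hxPP : (φ v, v) ∈ PP n B₀ := mem_PP.mpr ⟨hφ.2 v hvS, hSB v hvS⟩
  have h1 : ω.2 (φ v, v) = true := by
    have hxtC : (φ v, v) ∈ tC B₀ S φ h := by
      rw [tC, Finset.mem_filter]
      exact ⟨hxPP, Or.inl ⟨hvS, Or.inl rfl⟩⟩
    rw [hm.2 _ hxtC, valC, if_pos ⟨hvS, rfl⟩]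
  have h0 : ω.2 (φ v, v) = false := by
    have hxtC : (φ v, v) ∈ tC B₀ S φ' h := by
      rw [tC, Finset.mem_filter]
      exact ⟨hxPP, Or.inl ⟨hvS, Or.inr ⟨hlt, h2 v hvS⟩⟩⟩
    rw [hm'.2 _ hxtC, valC, if_neg (fun hcon => ne_of_lt hlt hcon.2)]
  rw [h1] at h0
  exact absurd h0 (by simp)

lemma unique_match {B₀ S : Finset (Fin n)} (hSB : ∀ v ∈ S, v ∉ B₀)
    {φ φ' : Fin n → Fin n} {h h' : Fin n × Fin n → Bool} {ω : Omega n}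
    (hφ : consφ B₀ S φ) (hh : consh B₀ h) (h2 : cons2 S φ h) (hm : Match B₀ S φ h ω)
    (hφ' : consφ B₀ S φ') (hh' : consh B₀ h') (h2' : cons2 S φ' h')
    (hm' : Match B₀ S φ' h' ω) : φ = φ' ∧ h = h' := by
  have hhh : h = h' := by
    funext x
    by_cases hx : x ∈ PP n B₀
    · rw [← hm.1 x hx, ← hm'.1 x hx]
    · rw [hh x hx, hh' x hx]
  subst hhh
  refine ⟨?_, rfl⟩
  funext v
  by_cases hvS : v ∈ S
  · rcases lt_trichotomy (φ v) (φ' v) with hlt | heq | hgt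
    · exact absurd (unique_helper hSB hφ h2 hm hm' hvS hlt) id
    · exact heq
    · exact absurd (unique_helper hSB hφ' h2' hm' hm hvS hgt) id
  · rw [hφ.1 v hvS, hφ'.1 v hvS]

end PZFAux

namespace PZFAux
open PZF
variable {n : ℕ}

lemma bern_total (r : ℝ) : bern r true + bern r false = 1 := by simp [bern]

lemma pr_match (p dL : ℝ) (H : SimpleGraph (Fin n)) (B₀ S : Finset (Fin n))
    (φ : Fin n → Fin n) (h : Fin n × Fin n → Bool) :
    Pr n p dL H B₀ (Match B₀ S φ h)
      = (∏ x ∈ PP n B₀, bern p (h x))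
        * ∏ x ∈ tC B₀ S φ h, bern (param n p dL H B₀ x) (valC S φ x) := by
  classical
  rw [Pr]
  rw [Fintype.sum_prod_type]
  have hterm : ∀ (g1 : Sym2 (Fin n) → Bool) (g2 : Fin n × Fin n → Bool),
      (if Match B₀ S φ h (g1, g2) then wt n p dL H B₀ (g1, g2) else 0)
      = (if (∀ x ∈ PP n B₀, g1 s(x.1, x.2) = h x) then ∏ e : Sym2 (Fin n), bern p (g1 e) else 0)
        * (if (∀ x ∈ tC B₀ S φ h, g2 x = valC S φ x) then
            ∏ x : Fin n × Fin n, bern (param n p dL H B₀ x) (g2 x) else 0) := by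
    intro g1 g2
    have hwt : wt n p dL H B₀ (g1, g2)
        = (∏ e : Sym2 (Fin n), bern p (g1 e))
          * ∏ x : Fin n × Fin n, bern (param n p dL H B₀ x) (g2 x) := by
      rw [wt]; rfl
    simp only [Match]
    by_cases hA : ∀ x ∈ PP n B₀, g1 s(x.1, x.2) = h x
    · by_cases hC : ∀ x ∈ tC B₀ S φ h, g2 x = valC S φ x
      · rw [if_pos hA, if_pos hC, hwt]; exact if_pos (⟨hA, hC⟩ : _ ∧ _)
      · rw [if_neg hC, mul_zero]; exact if_neg (fun hm => hC hm.2)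
    · rw [if_neg hA, zero_mul]; exact if_neg (fun hm => hA hm.1)
  rw [Finset.sum_congr rfl (fun g1 _ => Finset.sum_congr rfl (fun g2 _ => hterm g1 g2))]
  rw [← Finset.sum_mul_sum]
  have hinj : ∀ x ∈ PP n B₀, ∀ y ∈ PP n B₀,
      (fun z : Fin n × Fin n => s(z.1, z.2)) x = (fun z : Fin n × Fin n => s(z.1, z.2)) y
      → x = y := by
    intro x hx y hy hxy
    simp only [Sym2.eq_iff] at hxy
    rcases hxy with ⟨h1, h2⟩ | ⟨h1, h2⟩
    · exact Prod.ext h1 h2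
    · exfalso
      exact (mem_PP.mp hx).2 (by rw [h2]; exact (mem_PP.mp hy).1)
  have hedge := pi_factor' (fun (_ : Sym2 (Fin n)) (b : Bool) => bern p b)
    (PP n B₀) (fun z : Fin n × Fin n => s(z.1, z.2)) hinj h
  have hcoin := pi_factor' (fun (x : Fin n × Fin n) (b : Bool) => bern (param n p dL H B₀ x) b)
    (tC B₀ S φ h) id (fun x _ y _ hxy => hxy) (valC S φ)
  simp only [id] at hcoin
  rw [hedge, hcoin]
  rw [Finset.prod_eq_one (fun e _ => bern_total p),
    Finset.prod_eq_one (fun x _ => bern_total (param n p dL H B₀ x))]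
  ring

end PZFAux

namespace PZFAux
open PZF
variable {n : ℕ}

noncomputable def wloc (n : ℕ) (p dL : ℝ) (H : SimpleGraph (Fin n)) (B₀ S : Finset (Fin n))
    (φ : Fin n → Fin n) (x : Fin n × Fin n) (b : Bool) : ℝ :=
  if x.2 ∈ S then
    if x.1 = φ x.2 then (if b then p * forceP n dL H B₀ x.1 else 0)
    else if x.1 < φ x.2 then (if b then p * (1 - forceP n dL H B₀ x.1) else 1 - p)
    else (if b then p else 1 - p)
  else (if b then p * (1 - forceP n dL H B₀ x.1) else 1 - p)

lemma forceP_mem {p dL : ℝ} (hdL : 0 < dL) (H : SimpleGraph (Fin n)) (B₀ : Finset (Fin n))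
    (u : Fin n) : 0 ≤ forceP n dL H B₀ u ∧ forceP n dL H B₀ u ≤ 1 := by
  constructor
  · apply le_min
    · norm_num
    · positivity
  · exact min_le_left _ _

lemma prodw {p dL : ℝ} {H : SimpleGraph (Fin n)} {B₀ S : Finset (Fin n)}
    {φ : Fin n → Fin n} {h : Fin n × Fin n → Bool}
    (h2 : cons2 S φ h) :
    (∏ x ∈ PP n B₀, bern p (h x))
      * (∏ x ∈ tC B₀ S φ h, bern (param n p dL H B₀ x) (valC S φ x))
    = ∏ x ∈ PP n B₀, wloc n p dL H B₀ S φ x (h x) := by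
  rw [tC, Finset.prod_filter, ← Finset.prod_mul_distrib]
  apply Finset.prod_congr rfl
  intro x hx
  have hparam : param n p dL H B₀ x = forceP n dL H B₀ x.1 := if_pos (mem_PP.mp hx)
  by_cases hxs : x.2 ∈ S
  · by_cases heq : x.1 = φ x.2
    · have hx2 : h x = true := by
        have h3 := h2 x.2 hxs
        rwa [show (φ x.2, x.2) = x from by rw [← heq]] at h3
      have hcC : cC S φ h x := Or.inl ⟨hxs, Or.inl heq⟩
      rw [hx2, if_pos hcC]
      simp only [wloc, if_pos hxs, if_pos heq, valC, if_pos (⟨hxs, heq⟩ : _ ∧ _), hparam]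
      simp [bern]
    · by_cases hlt : x.1 < φ x.2
      · cases hb : h x
        · have hncC : ¬ cC S φ h x := by
            rintro (⟨-, hq | ⟨-, hh⟩⟩ | ⟨hns, -⟩)
            · exact heq hq
            · rw [hb] at hh; simp at hh
            · exact hns hxs
          rw [if_neg hncC]
          simp only [wloc, if_pos hxs, if_neg heq, if_pos hlt]
          simp [bern]
        · have hcC : cC S φ h x := Or.inl ⟨hxs, Or.inr ⟨hlt, hb⟩⟩
          rw [if_pos hcC]
          simp only [wloc, if_pos hxs, if_neg heq, if_pos hlt, valC,
            if_neg (fun hcon : _ ∧ _ => heq hcon.2), hparam]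
          simp [bern]
      · have hncC : ¬ cC S φ h x := by
          rintro (⟨-, hq | ⟨hl, -⟩⟩ | ⟨hns, -⟩)
          exacts [heq hq, hlt hl, hns hxs]
        rw [if_neg hncC]
        simp only [wloc, if_pos hxs, if_neg heq, if_neg hlt]
        cases hb : h x <;> simp [bern]
  · cases hb : h x
    · have hncC : ¬ cC S φ h x := by
        rintro (⟨hs, -⟩ | ⟨-, hh⟩)
        · exact hxs hs
        · rw [hb] at hh; simp at hh
      rw [if_neg hncC]
      simp only [wloc, if_neg hxs]
      simp [bern]
    · have hcC : cC S φ h x := Or.inr ⟨hxs, hb⟩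
      rw [if_pos hcC]
      simp only [wloc, if_neg hxs, valC, if_neg (fun hcon : _ ∧ _ => hxs hcon.1), hparam]
      simp [bern]

lemma prod_wloc_zero {p dL : ℝ} {H : SimpleGraph (Fin n)} {B₀ S : Finset (Fin n)}
    (hSB : ∀ v ∈ S, v ∉ B₀) {φ : Fin n → Fin n} {h : Fin n × Fin n → Bool}
    (hφ : consφ B₀ S φ) (hn2 : ¬ cons2 S φ h) :
    ∏ x ∈ PP n B₀, wloc n p dL H B₀ S φ x (h x) = 0 := by
  rw [cons2] at hn2
  push_neg at hn2
  obtain ⟨v, hvS, hfalse⟩ := hn2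
  replace hfalse : h (φ v, v) = false := Bool.eq_false_iff.mpr hfalse
  apply Finset.prod_eq_zero (mem_PP.mpr (show ((φ v, v) : Fin n × Fin n).1 ∈ B₀ ∧
    ((φ v, v) : Fin n × Fin n).2 ∉ B₀ from ⟨hφ.2 v hvS, hSB v hvS⟩))
  rw [hfalse]
  simp [wloc, hvS]

lemma wloc_nonneg {p dL : ℝ} (hp0 : 0 ≤ p) (hp1 : p ≤ 1) (hdL : 0 < dL)
    {H : SimpleGraph (Fin n)} {B₀ S : Finset (Fin n)} {φ : Fin n → Fin n}
    (x : Fin n × Fin n) (b : Bool) : 0 ≤ wloc n p dL H B₀ S φ x b := by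
  obtain ⟨hq0, hq1⟩ := forceP_mem (p := p) hdL H B₀ x.1
  rw [wloc]
  split_ifs <;> nlinarith

lemma wloc_rel {p dL : ℝ} (hp0 : 0 ≤ p) (hp1 : p ≤ 1) (hdL : 0 < dL)
    {H : SimpleGraph (Fin n)} {B₀ S : Finset (Fin n)} {φ : Fin n → Fin n}
    {x : Fin n × Fin n} (hnot : ¬ (x.2 ∈ S ∧ x.1 = φ x.2)) :
    wloc n p dL H B₀ S φ x true
      ≤ p * (wloc n p dL H B₀ S φ x true + wloc n p dL H B₀ S φ x false) := by
  obtain ⟨hq0, hq1⟩ := forceP_mem (p := p) hdL H B₀ x.1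
  simp only [wloc]
  by_cases hxs : x.2 ∈ S
  · rw [if_pos hxs, if_pos hxs, if_neg (fun hc => hnot ⟨hxs, hc⟩),
      if_neg (fun hc => hnot ⟨hxs, hc⟩)]
    by_cases hlt : x.1 < φ x.2
    · rw [if_pos hlt, if_pos hlt]
      norm_num
      nlinarith [mul_nonneg (mul_nonneg hp0 (by linarith : (0:ℝ) ≤ 1 - p)) hq0]
    · rw [if_neg hlt, if_neg hlt]
      norm_num
  · rw [if_neg hxs, if_neg hxs]
    norm_num
    nlinarith [mul_nonneg (mul_nonneg hp0 (by linarith : (0:ℝ) ≤ 1 - p)) hq0]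

end PZFAux

namespace PZFAux
open PZF
variable {n : ℕ}

lemma myTail_eq_binTail (p : ℝ) (m t : ℕ) : myTail m p t = binTail m p t := by
  induction m generalizing t with
  | zero => rw [binTail_zero]; rfl
  | succ m ih => rw [binTail_succ, ← ih, ← ih]; rfl

lemma bern_nonneg {r : ℝ} (h0 : 0 ≤ r) (h1 : r ≤ 1) (b : Bool) : 0 ≤ bern r b := by
  cases b <;> simp [bern] <;> linarith

lemma wt_nonneg {p dL : ℝ} (hp0 : 0 ≤ p) (hp1 : p ≤ 1) (hdL : 0 < dL)
    (H : SimpleGraph (Fin n)) (B₀ : Finset (Fin n)) (ω : Omega n) :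
    0 ≤ wt n p dL H B₀ ω := by
  rw [wt]
  apply mul_nonneg
  · exact Finset.prod_nonneg fun e _ => bern_nonneg hp0 hp1 _
  · apply Finset.prod_nonneg
    intro x _
    split
    · exact bern_nonneg (forceP_mem (p := p) hdL H B₀ x.1).1
        (forceP_mem (p := p) hdL H B₀ x.1).2 _
    · exact bern_nonneg hp0 hp1 _

lemma Pr_nonneg {p dL : ℝ} (hp0 : 0 ≤ p) (hp1 : p ≤ 1) (hdL : 0 < dL)
    (H : SimpleGraph (Fin n)) (B₀ : Finset (Fin n)) (E : Omega n → Prop) :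
    0 ≤ Pr n p dL H B₀ E := by
  rw [Pr]
  apply Finset.sum_nonneg
  intro ω _
  split
  · exact wt_nonneg hp0 hp1 hdL H B₀ ω
  · exact le_rfl

lemma nh_card {B₀ S S' : Finset (Fin n)} (hSB : ∀ v ∈ S, v ∉ B₀)
    (hS' : ∀ w ∈ S', w ∉ B₀ ∧ w ∉ S) {φ : Fin n → Fin n} {h : Fin n × Fin n → Bool}
    (hφ : consφ B₀ S φ) (h2 : cons2 S φ h) :
    (∑ x ∈ B₀ ×ˢ (S ∪ S'), if h x = true then 1 else 0)
      = (((PP n B₀).filter (fun x => h x = true))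
          ∩ ((B₀ ×ˢ (S ∪ S')) \ S.image (fun v => (φ v, v)))).card + S.card := by
  classical
  have h1 : (∑ x ∈ B₀ ×ˢ (S ∪ S'), if h x = true then 1 else 0)
      = ((B₀ ×ˢ (S ∪ S')).filter (fun x => h x = true)).card := by
    rw [Finset.card_filter]
  set A := (B₀ ×ˢ (S ∪ S')).filter (fun x => h x = true) with hA
  set img := S.image (fun v => (φ v, v)) with himg
  have himg_sub : img ⊆ A := by
    intro x hx
    rw [himg, Finset.mem_image] at hx
    obtain ⟨v, hv, rfl⟩ := hx
    rw [hA, Finset.mem_filter, Finset.mem_product]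
    exact ⟨⟨hφ.2 v hv, Finset.mem_union_left _ hv⟩, h2 v hv⟩
  have hsub : ∀ x : Fin n × Fin n, x ∈ B₀ ×ˢ (S ∪ S') → x ∈ PP n B₀ := by
    intro x hx
    rw [Finset.mem_product] at hx
    refine mem_PP.mpr ⟨hx.1, ?_⟩
    rcases Finset.mem_union.mp hx.2 with hh1 | hh1
    · exact hSB _ hh1
    · exact (hS' _ hh1).1
  have hTrel : ((PP n B₀).filter (fun x => h x = true)) ∩ ((B₀ ×ˢ (S ∪ S')) \ img)
      = A \ img := by
    ext x
    simp only [Finset.mem_inter, Finset.mem_filter, Finset.mem_sdiff, hA]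
    constructor
    · rintro ⟨⟨-, hhx⟩, ⟨hxB, hximg⟩⟩
      exact ⟨⟨hxB, hhx⟩, hximg⟩
    · rintro ⟨⟨hxB, hhx⟩, hximg⟩
      exact ⟨⟨hsub x hxB, hhx⟩, hxB, hximg⟩
  have hcard : (A \ img).card + img.card = A.card :=
    Finset.card_sdiff_add_card_eq_card himg_sub
  have himgcard : img.card = S.card := by
    rw [himg]
    apply Finset.card_image_of_injOn
    intro u _ v _ he
    exact congrArg Prod.snd he
  rw [h1, hTrel]
  omega

end PZFAux

namespace PZFAux
open PZF
variable {n : ℕ}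

lemma reindex_consh {B₀ : Finset (Fin n)} (F : ((Fin n × Fin n) → Bool) → ℝ) :
    (∑ h : (Fin n × Fin n) → Bool, if consh B₀ h then F h else 0)
      = ∑ T ∈ (PP n B₀).powerset, F (fun x => decide (x ∈ T)) := by
  classical
  rw [← Finset.sum_filter]
  apply Finset.sum_nbij' (fun h => (PP n B₀).filter (fun x => h x = true))
    (fun T => (fun x => decide (x ∈ T)))
  · intro h _
    rw [Finset.mem_powerset]
    exact Finset.filter_subset _ _
  · intro T hT
    rw [Finset.mem_powerset] at hT
    rw [Finset.mem_filter]
    refine ⟨Finset.mem_univ _, ?_⟩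
    intro x hx
    simp only [decide_eq_false_iff_not]
    exact fun hc => hx (hT hc)
  · intro h hh
    rw [Finset.mem_filter] at hh
    funext x
    by_cases hx : x ∈ PP n B₀
    · by_cases hhx : h x = true
      · simp [Finset.mem_filter, hx, hhx]
      · have hfx : h x = false := Bool.eq_false_iff.mpr hhx
        rw [hfx]
        simp [Finset.mem_filter, hfx]
    · rw [hh.2 x hx]
      simp [Finset.mem_filter, hx]
  · intro T hT
    rw [Finset.mem_powerset] at hT
    ext x
    simp only [Finset.mem_filter, decide_eq_true_eq]
    exact ⟨fun hx => hx.2, fun hx => ⟨hT hx, hx⟩⟩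
  · intro h hh
    rw [Finset.mem_filter] at hh
    congr 1
    funext x
    by_cases hx : x ∈ PP n B₀
    · simp [Finset.mem_filter, hx]
    · rw [hh.2 x hx]
      simp [Finset.mem_filter, hx]

lemma perphi {p dL : ℝ} (hp0 : 0 ≤ p) (hp1 : p ≤ 1) (hdL : 0 < dL)
    {H : SimpleGraph (Fin n)} {B₀ S S' : Finset (Fin n)}
    (hSB : ∀ v ∈ S, v ∉ B₀) (hS' : ∀ w ∈ S', w ∉ B₀ ∧ w ∉ S) (k : ℕ)
    (φ : Fin n → Fin n) :
    (∑ h : (Fin n × Fin n) → Bool,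
        if (consφ B₀ S φ ∧ consh B₀ h ∧ cons2 S φ h) then
          (if k ≤ ∑ x ∈ B₀ ×ˢ (S ∪ S'), (if h x = true then 1 else 0)
            then ∏ x ∈ PP n B₀, wloc n p dL H B₀ S φ x (h x) else 0) else 0)
      ≤ myTail (B₀.card * S.card + B₀.card * S'.card) p (k - S.card)
        * ∑ h : (Fin n × Fin n) → Bool,
            if (consφ B₀ S φ ∧ consh B₀ h ∧ cons2 S φ h) then
              ∏ x ∈ PP n B₀, wloc n p dL H B₀ S φ x (h x) else 0 := by
  classical
  set m0 := B₀.card * S.card + B₀.card * S'.card with hm0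
  set t0 := k - S.card with ht0
  set rel := (B₀ ×ˢ (S ∪ S')) \ S.image (fun v => (φ v, v)) with hrel
  set wa : Fin n × Fin n → ℝ := fun x => wloc n p dL H B₀ S φ x true with hwa
  set wb : Fin n × Fin n → ℝ := fun x => wloc n p dL H B₀ S φ x false with hwb
  by_cases hφ : consφ B₀ S φ
  · -- rewrite the numerator sum
    have hnums : (∑ h : (Fin n × Fin n) → Bool,
        if (consφ B₀ S φ ∧ consh B₀ h ∧ cons2 S φ h) then
          (if k ≤ ∑ x ∈ B₀ ×ˢ (S ∪ S'), (if h x = true then 1 else 0)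
            then ∏ x ∈ PP n B₀, wloc n p dL H B₀ S φ x (h x) else 0) else 0)
        = ∑ h : (Fin n × Fin n) → Bool,
            if consh B₀ h then
              (if t0 ≤ (((PP n B₀).filter (fun x => h x = true)) ∩ rel).card
                then ∏ x ∈ PP n B₀, wloc n p dL H B₀ S φ x (h x) else 0) else 0 := by
      apply Finset.sum_congr rfl
      intro h _
      by_cases hh : consh B₀ h
      · by_cases h2 : cons2 S φ h
        · rw [if_pos ⟨hφ, hh, h2⟩, if_pos hh]
          rw [nh_card hSB hS' hφ h2, ← hrel]
          congr 1
          rw [eq_iff_iff, ht0]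
          omega
        · rw [if_neg (fun hc => h2 hc.2.2), if_pos hh,
            prod_wloc_zero hSB hφ h2]
          split <;> rfl
      · rw [if_neg (fun hc => hh hc.2.1), if_neg hh]
    have hdens : (∑ h : (Fin n × Fin n) → Bool,
        if (consφ B₀ S φ ∧ consh B₀ h ∧ cons2 S φ h) then
          ∏ x ∈ PP n B₀, wloc n p dL H B₀ S φ x (h x) else 0)
        = ∑ h : (Fin n × Fin n) → Bool,
            if consh B₀ h then ∏ x ∈ PP n B₀, wloc n p dL H B₀ S φ x (h x) else 0 := by
      apply Finset.sum_congr rfl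
      intro h _
      by_cases hh : consh B₀ h
      · by_cases h2 : cons2 S φ h
        · rw [if_pos ⟨hφ, hh, h2⟩, if_pos hh]
        · rw [if_neg (fun hc => h2 hc.2.2), if_pos hh, prod_wloc_zero hSB hφ h2]
      · rw [if_neg (fun hc => hh hc.2.1), if_neg hh]
    rw [hnums, hdens, reindex_consh, reindex_consh]
    -- identify the transported summands
    have hfiltT : ∀ T ∈ (PP n B₀).powerset,
        (PP n B₀).filter (fun x => decide (x ∈ T) = true) = T := by
      intro T hT
      rw [Finset.mem_powerset] at hT
      ext x
      simp only [Finset.mem_filter, decide_eq_true_eq]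
      exact ⟨fun hx => hx.2, fun hx => ⟨hT hx, hx⟩⟩
    have hprodT : ∀ T ∈ (PP n B₀).powerset,
        ∏ x ∈ PP n B₀, wloc n p dL H B₀ S φ x (decide (x ∈ T))
          = (∏ x ∈ T, wa x) * ∏ x ∈ PP n B₀ \ T, wb x := by
      intro T hT
      rw [Finset.mem_powerset] at hT
      rw [← Finset.prod_sdiff hT, mul_comm]
      congr 1
      · apply Finset.prod_congr rfl
        intro x hx
        rw [decide_eq_true (by exact hx)]
      · apply Finset.prod_congr rfl
        intro x hx
        rw [Finset.mem_sdiff] at hx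
        rw [decide_eq_false hx.2]
    have hnum2 : (∑ T ∈ (PP n B₀).powerset,
        (if t0 ≤ (((PP n B₀).filter (fun x => decide (x ∈ T) = true)) ∩ rel).card
          then ∏ x ∈ PP n B₀, wloc n p dL H B₀ S φ x (decide (x ∈ T)) else 0))
        = ∑ T ∈ (PP n B₀).powerset,
          (if t0 ≤ (T ∩ rel).card then (∏ x ∈ T, wa x) * ∏ x ∈ PP n B₀ \ T, wb x else 0) := by
      apply Finset.sum_congr rfl
      intro T hT
      rw [hfiltT T hT, hprodT T hT]
    have hden2 : (∑ T ∈ (PP n B₀).powerset,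
          ∏ x ∈ PP n B₀, wloc n p dL H B₀ S φ x (decide (x ∈ T)))
        = ∏ x ∈ PP n B₀, (wa x + wb x) := by
      rw [Finset.prod_add]
      apply Finset.sum_congr rfl
      intro T hT
      exact hprodT T hT
    rw [hnum2, hden2]
    -- apply the domination lemma
    have hrelsub : rel ⊆ PP n B₀ := by
      intro x hx
      rw [hrel, Finset.mem_sdiff] at hx
      rw [Finset.mem_product] at hx
      refine mem_PP.mpr ⟨hx.1.1, ?_⟩
      rcases Finset.mem_union.mp hx.1.2 with hh1 | hh1
      · exact hSB _ hh1
      · exact (hS' _ hh1).1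
    have hdom := dom (p := p) hp0 hp1 wa wb (PP n B₀) rel hrelsub
      (fun x _ => wloc_nonneg hp0 hp1 hdL x true)
      (fun x _ => wloc_nonneg hp0 hp1 hdL x false)
      (fun x hx => by
        apply wloc_rel hp0 hp1 hdL
        rintro ⟨hxs, hxe⟩
        rw [hrel, Finset.mem_sdiff] at hx
        apply hx.2
        rw [Finset.mem_image]
        exact ⟨x.2, hxs, Prod.ext hxe.symm rfl⟩) t0
    have hrelcard : rel.card ≤ m0 := by
      calc rel.card ≤ (B₀ ×ˢ (S ∪ S')).card :=
            Finset.card_le_card (by rw [hrel]; exact Finset.sdiff_subset)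
        _ = B₀.card * (S ∪ S').card := Finset.card_product _ _
        _ ≤ B₀.card * (S.card + S'.card) :=
            Nat.mul_le_mul_left _ (Finset.card_union_le _ _)
        _ = m0 := by rw [hm0]; ring
    have hprodnn : (0:ℝ) ≤ ∏ x ∈ PP n B₀, (wa x + wb x) :=
      Finset.prod_nonneg fun x _ => add_nonneg (wloc_nonneg hp0 hp1 hdL x true)
        (wloc_nonneg hp0 hp1 hdL x false)
    calc (∑ T ∈ (PP n B₀).powerset,
          if t0 ≤ (T ∩ rel).card then (∏ x ∈ T, wa x) * ∏ x ∈ PP n B₀ \ T, wb x else 0)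
        ≤ myTail rel.card p t0 * ∏ x ∈ PP n B₀, (wa x + wb x) := hdom
      _ ≤ myTail m0 p t0 * ∏ x ∈ PP n B₀, (wa x + wb x) :=
          mul_le_mul_of_nonneg_right (myTail_mono_m hp0 hp1 hrelcard t0) hprodnn
  · -- inconsistent φ: both sides vanish
    have l1 : (∑ h : (Fin n × Fin n) → Bool,
        if (consφ B₀ S φ ∧ consh B₀ h ∧ cons2 S φ h) then
          (if k ≤ ∑ x ∈ B₀ ×ˢ (S ∪ S'), (if h x = true then 1 else 0)
            then ∏ x ∈ PP n B₀, wloc n p dL H B₀ S φ x (h x) else 0) else 0) = 0 :=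
      Finset.sum_eq_zero fun h _ => if_neg fun hc => hφ hc.1
    have l2 : (∑ h : (Fin n × Fin n) → Bool,
        if (consφ B₀ S φ ∧ consh B₀ h ∧ cons2 S φ h) then
          ∏ x ∈ PP n B₀, wloc n p dL H B₀ S φ x (h x) else 0) = 0 :=
      Finset.sum_eq_zero fun h _ => if_neg fun hc => hφ hc.1
    rw [l1, l2, mul_zero]

end PZFAux

namespace PZFAux
open PZF
variable {n : ℕ}

lemma step1a {B₀ S : Finset (Fin n)} (hSB : ∀ v ∈ S, v ∉ B₀) {ω : Omega n}
    (hf : forcedSet n B₀ ω = S) (X : ℝ) :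
    X = ∑ c : (Fin n → Fin n) × ((Fin n × Fin n) → Bool),
          if ((consφ B₀ S c.1 ∧ consh B₀ c.2 ∧ cons2 S c.1 c.2) ∧ Match B₀ S c.1 c.2 ω)
          then X else 0 := by
  classical
  obtain ⟨φ0, h0, hc1, hc2, hc3, hm⟩ := exists_match hf
  rw [Finset.sum_eq_single ((φ0, h0) : (Fin n → Fin n) × ((Fin n × Fin n) → Bool))]
  · rw [if_pos ⟨⟨hc1, hc2, hc3⟩, hm⟩]
  · intro c _ hne
    rw [if_neg]
    rintro ⟨⟨d1, d2, d3⟩, dm⟩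
    obtain ⟨e1, e2⟩ := unique_match hSB d1 d2 d3 dm hc1 hc2 hc3 hm
    exact hne (Prod.ext e1 e2)
  · intro hc
    exact absurd (Finset.mem_univ _) hc

lemma step1b {B₀ S : Finset (Fin n)} (hSB : ∀ v ∈ S, v ∉ B₀) {ω : Omega n}
    (hf : ¬ forcedSet n B₀ ω = S) (X : ℝ) :
    (0:ℝ) = ∑ c : (Fin n → Fin n) × ((Fin n × Fin n) → Bool),
          if ((consφ B₀ S c.1 ∧ consh B₀ c.2 ∧ cons2 S c.1 c.2) ∧ Match B₀ S c.1 c.2 ω)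
          then X else 0 := by
  symm
  apply Finset.sum_eq_zero
  intro c _
  rw [if_neg]
  rintro ⟨⟨d1, -, d3⟩, dm⟩
  exact hf (sound hSB d1 d3 dm)

end PZFAux

theorem edges_to_forced_union_stochastic_bound'
    (n : ℕ) (p dL : ℝ) (hp0 : 0 ≤ p) (hp1 : p ≤ 1) (hdL : 0 < dL)
    (H : SimpleGraph (Fin n)) (B₀ : Finset (Fin n))
    (S : Finset (Fin n)) (hS : ∀ w ∈ S, w ∉ B₀)
    (S' : Finset (Fin n)) (hS' : ∀ w ∈ S', w ∉ B₀ ∧ w ∉ S) (k : ℕ) :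
    PZF.Pr n p dL H B₀
        (fun ω => k ≤ PZF.eCount n B₀ (S ∪ S') ω ∧ PZF.forcedSet n B₀ ω = S) /
      PZF.Pr n p dL H B₀ (fun ω => PZF.forcedSet n B₀ ω = S) ≤
    PZF.binTail (B₀.card * S.card + B₀.card * S'.card) p (k - S.card) := by
  classical
  open PZFAux in
  have hinner_den : ∀ c : (Fin n → Fin n) × ((Fin n × Fin n) → Bool),
      (∑ ω : PZF.Omega n,
        if ((consφ B₀ S c.1 ∧ consh B₀ c.2 ∧ cons2 S c.1 c.2) ∧ Match B₀ S c.1 c.2 ω)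
          then PZF.wt n p dL H B₀ ω else 0)
      = if (consφ B₀ S c.1 ∧ consh B₀ c.2 ∧ cons2 S c.1 c.2) then
          ∏ x ∈ PP n B₀, wloc n p dL H B₀ S c.1 x (c.2 x) else 0 := by
    intro c
    by_cases hc : consφ B₀ S c.1 ∧ consh B₀ c.2 ∧ cons2 S c.1 c.2
    · rw [if_pos hc]
      have e1 : ∀ ω : PZF.Omega n,
          (if ((consφ B₀ S c.1 ∧ consh B₀ c.2 ∧ cons2 S c.1 c.2) ∧ Match B₀ S c.1 c.2 ω)
            then PZF.wt n p dL H B₀ ω else 0)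
          = (if Match B₀ S c.1 c.2 ω then PZF.wt n p dL H B₀ ω else 0) :=
        fun ω => if_congr (and_iff_right hc) rfl rfl
      rw [Finset.sum_congr rfl (fun ω _ => e1 ω)]
      have e2 : (∑ ω : PZF.Omega n,
          if Match B₀ S c.1 c.2 ω then PZF.wt n p dL H B₀ ω else 0)
          = PZF.Pr n p dL H B₀ (Match B₀ S c.1 c.2) := rfl
      rw [e2, pr_match, prodw hc.2.2]
    · rw [if_neg hc]
      exact Finset.sum_eq_zero fun ω _ => if_neg fun hcon => hc hcon.1
  have hinner_num : ∀ c : (Fin n → Fin n) × ((Fin n × Fin n) → Bool),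
      (∑ ω : PZF.Omega n,
        if ((consφ B₀ S c.1 ∧ consh B₀ c.2 ∧ cons2 S c.1 c.2) ∧ Match B₀ S c.1 c.2 ω)
          then (if k ≤ PZF.eCount n B₀ (S ∪ S') ω then PZF.wt n p dL H B₀ ω else 0) else 0)
      = if (consφ B₀ S c.1 ∧ consh B₀ c.2 ∧ cons2 S c.1 c.2) then
          (if k ≤ ∑ x ∈ B₀ ×ˢ (S ∪ S'), (if c.2 x = true then 1 else 0)
            then ∏ x ∈ PP n B₀, wloc n p dL H B₀ S c.1 x (c.2 x) else 0) else 0 := by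
    intro c
    by_cases hc : consφ B₀ S c.1 ∧ consh B₀ c.2 ∧ cons2 S c.1 c.2
    · have e3 : ∀ ω : PZF.Omega n,
          (if ((consφ B₀ S c.1 ∧ consh B₀ c.2 ∧ cons2 S c.1 c.2) ∧ Match B₀ S c.1 c.2 ω)
            then (if k ≤ PZF.eCount n B₀ (S ∪ S') ω then PZF.wt n p dL H B₀ ω else 0) else 0)
          = (if Match B₀ S c.1 c.2 ω then
              (if k ≤ ∑ x ∈ B₀ ×ˢ (S ∪ S'), (if c.2 x = true then 1 else 0)
                then PZF.wt n p dL H B₀ ω else 0) else 0) := by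
        intro ω
        by_cases hm : Match B₀ S c.1 c.2 ω
        · rw [if_pos ⟨hc, hm⟩, if_pos hm, ecount S' hS hS' hm]
        · rw [if_neg (fun hcon => hm hcon.2), if_neg hm]
      rw [Finset.sum_congr rfl (fun ω _ => e3 ω), if_pos hc]
      by_cases hk : k ≤ ∑ x ∈ B₀ ×ˢ (S ∪ S'), (if c.2 x = true then 1 else 0)
      · have e4 : ∀ ω : PZF.Omega n,
            (if Match B₀ S c.1 c.2 ω then
              (if k ≤ ∑ x ∈ B₀ ×ˢ (S ∪ S'), (if c.2 x = true then 1 else 0)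
                then PZF.wt n p dL H B₀ ω else 0) else 0)
            = (if Match B₀ S c.1 c.2 ω then PZF.wt n p dL H B₀ ω else 0) := by
          intro ω
          rw [if_pos hk]
        rw [Finset.sum_congr rfl (fun ω _ => e4 ω), if_pos hk]
        have e2 : (∑ ω : PZF.Omega n,
            if Match B₀ S c.1 c.2 ω then PZF.wt n p dL H B₀ ω else 0)
            = PZF.Pr n p dL H B₀ (Match B₀ S c.1 c.2) := rfl
        rw [e2, pr_match, prodw hc.2.2]
      · rw [if_neg hk]
        apply Finset.sum_eq_zero
        intro ω _
        rw [if_neg hk, ite_self]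
    · rw [if_neg hc]
      exact Finset.sum_eq_zero fun ω _ => if_neg fun hcon => hc hcon.1
  have hden : PZF.Pr n p dL H B₀ (fun ω => PZF.forcedSet n B₀ ω = S)
      = ∑ φ : Fin n → Fin n, ∑ h : (Fin n × Fin n) → Bool,
          if (consφ B₀ S φ ∧ consh B₀ h ∧ cons2 S φ h) then
            ∏ x ∈ PP n B₀, wloc n p dL H B₀ S φ x (h x) else 0 := by
    simp only [PZF.Pr]
    calc _ = ∑ ω : PZF.Omega n, ∑ c : (Fin n → Fin n) × ((Fin n × Fin n) → Bool),
            (if ((consφ B₀ S c.1 ∧ consh B₀ c.2 ∧ cons2 S c.1 c.2) ∧ Match B₀ S c.1 c.2 ω)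
              then PZF.wt n p dL H B₀ ω else 0) :=
          Finset.sum_congr rfl (fun ω _ => by
            by_cases hf : PZF.forcedSet n B₀ ω = S
            · rw [if_pos hf]; exact step1a hS hf _
            · rw [if_neg hf]; exact step1b hS hf _)
      _ = ∑ c : (Fin n → Fin n) × ((Fin n × Fin n) → Bool), ∑ ω : PZF.Omega n,
            (if ((consφ B₀ S c.1 ∧ consh B₀ c.2 ∧ cons2 S c.1 c.2) ∧ Match B₀ S c.1 c.2 ω)
              then PZF.wt n p dL H B₀ ω else 0) := Finset.sum_comm
      _ = ∑ c : (Fin n → Fin n) × ((Fin n × Fin n) → Bool),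
            (if (consφ B₀ S c.1 ∧ consh B₀ c.2 ∧ cons2 S c.1 c.2) then
              ∏ x ∈ PP n B₀, wloc n p dL H B₀ S c.1 x (c.2 x) else 0) :=
          Finset.sum_congr rfl (fun c _ => hinner_den c)
      _ = ∑ φ : Fin n → Fin n, ∑ h : (Fin n × Fin n) → Bool,
            if (consφ B₀ S φ ∧ consh B₀ h ∧ cons2 S φ h) then
              ∏ x ∈ PP n B₀, wloc n p dL H B₀ S φ x (h x) else 0 := Fintype.sum_prod_type _
  have hnum : PZF.Pr n p dL H B₀
        (fun ω => k ≤ PZF.eCount n B₀ (S ∪ S') ω ∧ PZF.forcedSet n B₀ ω = S)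
      = ∑ φ : Fin n → Fin n, ∑ h : (Fin n × Fin n) → Bool,
          if (consφ B₀ S φ ∧ consh B₀ h ∧ cons2 S φ h) then
            (if k ≤ ∑ x ∈ B₀ ×ˢ (S ∪ S'), (if h x = true then 1 else 0)
              then ∏ x ∈ PP n B₀, wloc n p dL H B₀ S φ x (h x) else 0) else 0 := by
    simp only [PZF.Pr]
    calc _ = ∑ ω : PZF.Omega n,
            (if PZF.forcedSet n B₀ ω = S then
              (if k ≤ PZF.eCount n B₀ (S ∪ S') ω then PZF.wt n p dL H B₀ ω else 0) else 0) := by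
          apply Finset.sum_congr rfl
          intro ω _
          by_cases h1 : PZF.forcedSet n B₀ ω = S
            <;> by_cases h2 : k ≤ PZF.eCount n B₀ (S ∪ S') ω
            <;> simp [h1, h2]
      _ = ∑ ω : PZF.Omega n, ∑ c : (Fin n → Fin n) × ((Fin n × Fin n) → Bool),
            (if ((consφ B₀ S c.1 ∧ consh B₀ c.2 ∧ cons2 S c.1 c.2) ∧ Match B₀ S c.1 c.2 ω)
              then (if k ≤ PZF.eCount n B₀ (S ∪ S') ω then PZF.wt n p dL H B₀ ω else 0)
              else 0) :=
          Finset.sum_congr rfl (fun ω _ => by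
            by_cases hf : PZF.forcedSet n B₀ ω = S
            · rw [if_pos hf]; exact step1a hS hf _
            · rw [if_neg hf]; exact step1b hS hf _)
      _ = ∑ c : (Fin n → Fin n) × ((Fin n × Fin n) → Bool), ∑ ω : PZF.Omega n,
            (if ((consφ B₀ S c.1 ∧ consh B₀ c.2 ∧ cons2 S c.1 c.2) ∧ Match B₀ S c.1 c.2 ω)
              then (if k ≤ PZF.eCount n B₀ (S ∪ S') ω then PZF.wt n p dL H B₀ ω else 0)
              else 0) := Finset.sum_comm
      _ = ∑ c : (Fin n → Fin n) × ((Fin n × Fin n) → Bool),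
            (if (consφ B₀ S c.1 ∧ consh B₀ c.2 ∧ cons2 S c.1 c.2) then
              (if k ≤ ∑ x ∈ B₀ ×ˢ (S ∪ S'), (if c.2 x = true then 1 else 0)
                then ∏ x ∈ PP n B₀, wloc n p dL H B₀ S c.1 x (c.2 x) else 0) else 0) :=
          Finset.sum_congr rfl (fun c _ => hinner_num c)
      _ = ∑ φ : Fin n → Fin n, ∑ h : (Fin n × Fin n) → Bool,
            if (consφ B₀ S φ ∧ consh B₀ h ∧ cons2 S φ h) then
              (if k ≤ ∑ x ∈ B₀ ×ˢ (S ∪ S'), (if h x = true then 1 else 0)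
                then ∏ x ∈ PP n B₀, wloc n p dL H B₀ S φ x (h x) else 0) else 0 :=
          Fintype.sum_prod_type _
  have hkey : PZF.Pr n p dL H B₀
        (fun ω => k ≤ PZF.eCount n B₀ (S ∪ S') ω ∧ PZF.forcedSet n B₀ ω = S)
      ≤ myTail (B₀.card * S.card + B₀.card * S'.card) p (k - S.card)
        * PZF.Pr n p dL H B₀ (fun ω => PZF.forcedSet n B₀ ω = S) := by
    rw [hnum, hden, Finset.mul_sum]
    apply Finset.sum_le_sum
    intro φ _
    exact perphi hp0 hp1 hdL hS hS' k φ
  have hdnn : 0 ≤ PZF.Pr n p dL H B₀ (fun ω => PZF.forcedSet n B₀ ω = S) :=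
    Pr_nonneg hp0 hp1 hdL H B₀ _
  rcases hdnn.eq_or_lt with h0 | h0
  · rw [← h0, div_zero, ← myTail_eq_binTail]
    exact myTail_nonneg hp0 hp1 _ _
  · rw [div_le_iff₀ h0]
    calc PZF.Pr n p dL H B₀
          (fun ω => k ≤ PZF.eCount n B₀ (S ∪ S') ω ∧ PZF.forcedSet n B₀ ω = S)
        ≤ myTail (B₀.card * S.card + B₀.card * S'.card) p (k - S.card)
          * PZF.Pr n p dL H B₀ (fun ω => PZF.forcedSet n B₀ ω = S) := hkey
      _ = PZF.binTail (B₀.card * S.card + B₀.card * S'.card) p (k - S.card)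
          * PZF.Pr n p dL H B₀ (fun ω => PZF.forcedSet n B₀ ω = S) := by
          rw [myTail_eq_binTail]

/-- With the blue set `B₀ = Y_{≤ i}` and the edges within it exposed
(recorded in `H`), run one round of the modified forcing rule and let `Y_{i+1}` be the set of
newly forced vertices.  For any `S ⊆ V \\ B₀` and `S* ⊆ V \\ (B₀ ∪ S)`, conditioned on
`{Y_{i+1} = S}`, the number of edges `e(B₀, S ∪ S*)` is stochastically upper bounded by
`|S| + Bin(|B₀| |S| + |B₀| |S*|, p)`: for every `k`,
`P(e(B₀, S ∪ S*) ≥ k ∣ Y_{i+1} = S) ≤ P(|S| + Bin(|B₀| |S| + |B₀| |S*|, p) ≥ k)`. -/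
theorem edges_to_forced_union_stochastic_bound
    (n : ℕ) (p dL : ℝ) (hp0 : 0 ≤ p) (hp1 : p ≤ 1) (hdL : 0 < dL)
    (H : SimpleGraph (Fin n)) (B₀ : Finset (Fin n))
    (S : Finset (Fin n)) (hS : ∀ w ∈ S, w ∉ B₀)
    (S' : Finset (Fin n)) (hS' : ∀ w ∈ S', w ∉ B₀ ∧ w ∉ S) (k : ℕ) :
    PZF.Pr n p dL H B₀
        (fun ω => k ≤ PZF.eCount n B₀ (S ∪ S') ω ∧ PZF.forcedSet n B₀ ω = S) /
      PZF.Pr n p dL H B₀ (fun ω => PZF.forcedSet n B₀ ω = S) ≤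
    PZF.binTail (B₀.card * S.card + B₀.card * S'.card) p (k - S.card) := by
  exact edges_to_forced_union_stochastic_bound' n p dL hp0 hp1 hdL H B₀ S hS S' hS' k
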